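/- An open continuous surjection between compact Hausdorff spaces induces a continuous map between hyperspaces of subcontinua sending K to f(K), and if f is additionally monotone then H ↦ f⁻¹(H) gives a continuous map C(M) → C(X) with f(f⁻¹(H)) = H. -/

import Mathlib

/-- The hyperspace of nonempty subcontinua of `X`. -/
abbrev Subcontinua (X : Type*) [TopologicalSpace X] : Type _ :=
  {K : Set X // IsCompact K ∧ IsConnected K}

/-- The Vietoris topology on the hyperspace of subcontinua, generated by the sets
`{K : K ⊆ U}` and `{K : K ∩ U ≠ ∅}` for `U` open. -/
def vietorisTopology (X : Type*) [TopologicalSpace X] : TopologicalSpace (Subcontinua X) :=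
  TopologicalSpace.generateFrom
    ({S | ∃ U : Set X, IsOpen U ∧ S = {K : Subcontinua X | (K : Set X) ⊆ U}} ∪
     {S | ∃ U : Set X, IsOpen U ∧ S = {K : Subcontinua X | ((K : Set X) ∩ U).Nonempty}})

/-- An open continuous surjection `f : X → M` between compact Hausdorff
spaces induces a continuous map of hyperspaces `C(X) → C(M)`, `K ↦ f(K)`; and if `f`
is moreover monotone and closed then `H ↦ f⁻¹(H)` is a well-defined continuous map
`C(M) → C(X)` which is a right inverse of the former. -/
theorem stmt_18 {X M : Type*} [TopologicalSpace X] [TopologicalSpace M]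
    [CompactSpace X] [T2Space X] [CompactSpace M] [T2Space M]
    (f : X → M) (hf : Continuous f) (hfs : Function.Surjective f) (hfo : IsOpenMap f) :
    letI : TopologicalSpace (Subcontinua X) := vietorisTopology X
    letI : TopologicalSpace (Subcontinua M) := vietorisTopology M
    (∃ Φ : Subcontinua X → Subcontinua M,
        Continuous Φ ∧ ∀ K : Subcontinua X, (Φ K : Set M) = f '' (K : Set X)) ∧
    ((∀ p : M, IsConnected (f ⁻¹' {p})) → IsClosedMap f →
      ∃ Ψ : Subcontinua M → Subcontinua X,
        Continuous Ψ ∧ (∀ H : Subcontinua M, (Ψ H : Set X) = f ⁻¹' (H : Set M)) ∧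
        ∀ H : Subcontinua M, f '' (f ⁻¹' (H : Set M)) = (H : Set M)) := by
  letI : TopologicalSpace (Subcontinua X) := vietorisTopology X
  letI : TopologicalSpace (Subcontinua M) := vietorisTopology M
  constructor
  · -- part (a)
    refine ⟨fun K => ⟨f '' (K : Set X), K.2.1.image hf, K.2.2.image f hf.continuousOn⟩, ?_, ?_⟩
    · rw [vietorisTopology, vietorisTopology, continuous_generateFrom_iff]
      rintro S (⟨U, hU, rfl⟩ | ⟨U, hU, rfl⟩)
      · have : (fun K : Subcontinua X =>
            (⟨f '' (K : Set X), K.2.1.image hf, K.2.2.image f hf.continuousOn⟩ : Subcontinua M))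
            ⁻¹' {K : Subcontinua M | (K : Set M) ⊆ U}
            = {K : Subcontinua X | (K : Set X) ⊆ f ⁻¹' U} := by
          ext K; simp [Set.image_subset_iff]
        rw [this]
        exact TopologicalSpace.isOpen_generateFrom_of_mem
          (Or.inl ⟨f ⁻¹' U, hU.preimage hf, rfl⟩)
      · have : (fun K : Subcontinua X =>
            (⟨f '' (K : Set X), K.2.1.image hf, K.2.2.image f hf.continuousOn⟩ : Subcontinua M))
            ⁻¹' {K : Subcontinua M | ((K : Set M) ∩ U).Nonempty}
            = {K : Subcontinua X | ((K : Set X) ∩ f ⁻¹' U).Nonempty} := by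
          ext K
          constructor
          · rintro ⟨y, ⟨x, hxK, rfl⟩, hyU⟩; exact ⟨x, hxK, hyU⟩
          · rintro ⟨x, hxK, hxU⟩; exact ⟨f x, ⟨x, hxK, rfl⟩, hxU⟩
        rw [this]
        exact TopologicalSpace.isOpen_generateFrom_of_mem
          (Or.inr ⟨f ⁻¹' U, hU.preimage hf, rfl⟩)
    · intro K; rfl
  · -- part (b)
    intro hmono hfc
    have hconn : ∀ H : Subcontinua M, IsConnected (f ⁻¹' (H : Set M)) := by
      intro H
      obtain ⟨p, hp⟩ := H.2.2.nonempty
      refine ⟨H.2.2.nonempty.preimage' (fun y _ => hfs y), ?_⟩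
      rw [isPreconnected_closed_iff]
      intro u v hu hv hcov ⟨a, haH, hau⟩ ⟨b, hbH, hbv⟩
      have hHcl : IsClosed (f ⁻¹' (H : Set M)) := (H.2.1.isClosed).preimage hf
      have key := isPreconnected_closed_iff.1 H.2.2.isPreconnected
        (f '' (u ∩ f ⁻¹' (H : Set M))) (f '' (v ∩ f ⁻¹' (H : Set M)))
        (hfc _ (hu.inter hHcl)) (hfc _ (hv.inter hHcl))
        (by
          intro q hq
          obtain ⟨x, rfl⟩ := hfs q
          rcases hcov hq with h | h
          · exact Or.inl ⟨x, ⟨h, hq⟩, rfl⟩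
          · exact Or.inr ⟨x, ⟨h, hq⟩, rfl⟩)
        ⟨f a, haH, a, ⟨hau, haH⟩, rfl⟩ ⟨f b, hbH, b, ⟨hbv, hbH⟩, rfl⟩
      obtain ⟨q, hqH, ⟨x, ⟨hxu, hxH⟩, hxq⟩, ⟨y, ⟨hyv, hyH⟩, hyq⟩⟩ := key
      have := isPreconnected_closed_iff.1 (hmono q).isPreconnected u v hu hv
        (fun z hz => hcov (by rw [Set.mem_preimage, Set.mem_singleton_iff.1 hz]; exact hqH))
        ⟨x, hxq, hxu⟩ ⟨y, hyq, hyv⟩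
      obtain ⟨z, hzq, hzu, hzv⟩ := this
      exact ⟨z, by rw [Set.mem_preimage, Set.mem_singleton_iff.1 hzq]; exact hqH, hzu, hzv⟩
    have hcomp : ∀ H : Subcontinua M, IsCompact (f ⁻¹' (H : Set M)) :=
      fun H => ((H.2.1.isClosed).preimage hf).isCompact
    refine ⟨fun H => ⟨f ⁻¹' (H : Set M), hcomp H, hconn H⟩, ?_, fun H => rfl,
      fun H => Set.image_preimage_eq _ hfs⟩
    rw [vietorisTopology, vietorisTopology, continuous_generateFrom_iff]
    rintro S (⟨U, hU, rfl⟩ | ⟨U, hU, rfl⟩)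
    · have : (fun H : Subcontinua M => (⟨f ⁻¹' (H : Set M), hcomp H, hconn H⟩ : Subcontinua X))
          ⁻¹' {K : Subcontinua X | (K : Set X) ⊆ U}
          = {H : Subcontinua M | (H : Set M) ⊆ (f '' Uᶜ)ᶜ} := by
        ext H
        simp only [Set.mem_preimage, Set.mem_setOf_eq, Set.subset_compl_comm (t := f '' Uᶜ)]
        constructor
        · intro h
          rintro y ⟨x, hxU, rfl⟩ hyH
          exact hxU (h hyH)
        · intro h x hx
          by_contra hxU
          exact h ⟨x, hxU, rfl⟩ hx
      rw [this]
      exact TopologicalSpace.isOpen_generateFrom_of_mem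
        (Or.inl ⟨(f '' Uᶜ)ᶜ, (hfc _ hU.isClosed_compl).isOpen_compl, rfl⟩)
    · have : (fun H : Subcontinua M => (⟨f ⁻¹' (H : Set M), hcomp H, hconn H⟩ : Subcontinua X))
          ⁻¹' {K : Subcontinua X | ((K : Set X) ∩ U).Nonempty}
          = {H : Subcontinua M | ((H : Set M) ∩ f '' U).Nonempty} := by
        ext H
        constructor
        · rintro ⟨x, hxH, hxU⟩; exact ⟨f x, hxH, x, hxU, rfl⟩
        · rintro ⟨y, hyH, x, hxU, rfl⟩; exact ⟨x, hyH, hxU⟩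
      rw [this]
      exact TopologicalSpace.isOpen_generateFrom_of_mem
        (Or.inr ⟨f '' U, hfo _ hU, rfl⟩)
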